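/- Let A and B be n×n real symmetric positive-definite matrices and suppose there exists t₀ with 0 < t₀ < 1 such that B^{1/2}(B^{-1/2} A B^{-1/2})^{t₀} B^{1/2} = I (the identity lies on the geodesic from B to A). Then A and B commute: A B = B A. -/

import Mathlib

open Matrix

/-- If the identity lies on the geodesic from `B` to `A`, i.e.
`B^{1/2}(B^{-1/2} A B^{-1/2})^{t₀} B^{1/2} = I` for some `0 < t₀ < 1`
(where `(B^{-1/2} A B^{-1/2})^{t₀} = exp (t₀ • Lc)` with `Lc` the symmetric logarithm of
`B^{-1/2} A B^{-1/2}`), then `A` and `B` commute. -/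
theorem stmt_16 (n : ℕ) (A B sB Lc : Matrix (Fin n) (Fin n) ℝ) (t₀ : ℝ)
    (hA : A.PosDef) (hB : B.PosDef)
    (hsB : sB.PosDef) (hsB2 : sB * sB = B)
    (hLc : Lc.IsSymm) (hexpC : NormedSpace.exp Lc = sB⁻¹ * A * sB⁻¹)
    (ht₀ : 0 < t₀) (ht₁ : t₀ < 1)
    (hgeo : sB * NormedSpace.exp (t₀ • Lc) * sB = 1) :
    A * B = B * A := by
  have hdet : IsUnit sB.det := isUnit_iff_ne_zero.mpr (ne_of_gt hsB.det_pos)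
  have hinv1 : sB * sB⁻¹ = 1 := Matrix.mul_nonsing_inv _ hdet
  have hinv2 : sB⁻¹ * sB = 1 := Matrix.nonsing_inv_mul _ hdet
  set E := NormedSpace.exp (t₀ • Lc) with hE
  -- B is a two-sided inverse of E
  have hEB : E * B = 1 := by
    have h1 : E * sB = sB⁻¹ := by
      calc E * sB = (sB⁻¹ * sB) * E * sB := by rw [hinv2, Matrix.one_mul]
        _ = sB⁻¹ * (sB * E * sB) := by noncomm_ring
        _ = sB⁻¹ := by rw [hgeo, Matrix.mul_one]
    calc E * B = (E * sB) * sB := by rw [← hsB2, Matrix.mul_assoc]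
      _ = 1 := by rw [h1, hinv2]
  have hBE : B * E = 1 := by
    have h1 : sB * E = sB⁻¹ := by
      calc sB * E = sB * E * (sB * sB⁻¹) := by rw [hinv1, Matrix.mul_one]
        _ = (sB * E * sB) * sB⁻¹ := by noncomm_ring
        _ = sB⁻¹ := by rw [hgeo, Matrix.one_mul]
    calc B * E = sB * (sB * E) := by rw [← hsB2, Matrix.mul_assoc]
      _ = 1 := by rw [h1, hinv1]
  -- E commutes with exp Lc
  have hcomm : Commute E (NormedSpace.exp Lc) :=
    ((Commute.refl Lc).smul_left t₀).exp
  -- hence B commutes with exp Lc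
  have hBexp : B * NormedSpace.exp Lc = NormedSpace.exp Lc * B := by
    calc B * NormedSpace.exp Lc
        = B * NormedSpace.exp Lc * (E * B) := by rw [hEB, Matrix.mul_one]
      _ = B * (NormedSpace.exp Lc * E) * B := by noncomm_ring
      _ = B * (E * NormedSpace.exp Lc) * B := by rw [hcomm.eq]
      _ = (B * E) * (NormedSpace.exp Lc * B) := by noncomm_ring
      _ = NormedSpace.exp Lc * B := by rw [hBE, Matrix.one_mul]
  -- sB commutes with B
  have hsBB : sB * B = B * sB := by rw [← hsB2]; noncomm_ring
  -- A = sB * exp Lc * sB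
  have hAeq : A = sB * NormedSpace.exp Lc * sB := by
    rw [hexpC]
    calc A = (sB * sB⁻¹) * A * (sB⁻¹ * sB) := by rw [hinv1, hinv2, Matrix.one_mul, Matrix.mul_one]
      _ = sB * (sB⁻¹ * A * sB⁻¹) * sB := by noncomm_ring
  calc A * B = sB * NormedSpace.exp Lc * (sB * B) := by rw [hAeq]; noncomm_ring
    _ = sB * NormedSpace.exp Lc * (B * sB) := by rw [hsBB]
    _ = sB * (NormedSpace.exp Lc * B) * sB := by noncomm_ring
    _ = sB * (B * NormedSpace.exp Lc) * sB := by rw [hBexp]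
    _ = (sB * B) * (NormedSpace.exp Lc * sB) := by noncomm_ring
    _ = B * (sB * NormedSpace.exp Lc * sB) := by rw [hsBB]; noncomm_ring
    _ = B * A := by rw [← hAeq]
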